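/- For the sequence z defined by z 0 = 0 and z (k+1) = z k + (1+ω)^(u k) / ω^(2·v k), where ω = e^{iπ/3} and u k, v k count the digits 1 and 2 respectively in the base-4 expansion of k, one has z (4n) = 3 · z n for all n. -/

import Mathlib

noncomputable def ω : ℂ := Complex.exp (Complex.I * Real.pi / 3)

def u (k : ℕ) : ℕ := (Nat.digits 4 k).count 1

def v (k : ℕ) : ℕ := (Nat.digits 4 k).count 2

lemma omega_cube : ω ^ 3 = -1 := by
  rw [ω, ← Complex.exp_nat_mul]
  rw [show ((3:ℕ) : ℂ) * (Complex.I * Real.pi / 3) = Real.pi * Complex.I by push_cast; ring]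
  exact Complex.exp_pi_mul_I

lemma omega_ne : ω ≠ 0 := Complex.exp_ne_zero _

lemma count_step (d n j : ℕ) (hd : d ≠ 0) (hj : j < 4) :
    (Nat.digits 4 (4 * n + j)).count d
      = (Nat.digits 4 n).count d + (if j = d then 1 else 0) := by
  rcases Nat.eq_zero_or_pos (4 * n + j) with h | h
  · have hn : n = 0 ∧ j = 0 := by omega
    obtain ⟨rfl, rfl⟩ := hn
    simp [hd, Ne.symm hd]
  · rw [Nat.digits_def' (by norm_num : 1 < 4) h]
    have h1 : (4 * n + j) % 4 = j := by omega
    have h2 : (4 * n + j) / 4 = n := by omega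
    rw [h1, h2, List.count_cons]
    by_cases h : j = d
    · simp [h]
    · simp [h, Ne.symm h]

lemma step_sum (n : ℕ) :
    (1 + ω) ^ (u (4 * n)) / ω ^ (2 * v (4 * n))
      + (1 + ω) ^ (u (4 * n + 1)) / ω ^ (2 * v (4 * n + 1))
      + (1 + ω) ^ (u (4 * n + 2)) / ω ^ (2 * v (4 * n + 2))
      + (1 + ω) ^ (u (4 * n + 3)) / ω ^ (2 * v (4 * n + 3))
      = 3 * ((1 + ω) ^ (u n) / ω ^ (2 * v n)) := by
  have hu0 : u (4 * n) = u n := by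
    have := count_step 1 n 0 (by norm_num) (by norm_num); simpa [u] using this
  have hu1 : u (4 * n + 1) = u n + 1 := by
    have := count_step 1 n 1 (by norm_num) (by norm_num); simpa [u] using this
  have hu2 : u (4 * n + 2) = u n := by
    have := count_step 1 n 2 (by norm_num) (by norm_num); simpa [u] using this
  have hu3 : u (4 * n + 3) = u n := by
    have := count_step 1 n 3 (by norm_num) (by norm_num); simpa [u] using this
  have hv0 : v (4 * n) = v n := by
    have := count_step 2 n 0 (by norm_num) (by norm_num); simpa [v] using this
  have hv1 : v (4 * n + 1) = v n := by
    have := count_step 2 n 1 (by norm_num) (by norm_num); simpa [v] using this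
  have hv2 : v (4 * n + 2) = v n + 1 := by
    have := count_step 2 n 2 (by norm_num) (by norm_num); simpa [v] using this
  have hv3 : v (4 * n + 3) = v n := by
    have := count_step 2 n 3 (by norm_num) (by norm_num); simpa [v] using this
  rw [hu0, hu1, hu2, hu3, hv0, hv1, hv2, hv3]
  have hω := omega_ne
  rw [show 2 * (v n + 1) = 2 * v n + 2 by ring, pow_add, pow_succ]
  field_simp
  ring_nf
  linear_combination (ω ^ (v n * 2) * (1 + ω) ^ u n) * omega_cube

theorem kochawave_z_scaling (z : ℕ → ℂ) (h0 : z 0 = 0)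
    (hrec : ∀ k, z (k + 1) = z k + (1 + ω) ^ (u k) / ω ^ (2 * v k)) :
    ∀ n, z (4 * n) = 3 * z n := by
  intro n
  induction n with
  | zero => simp [h0]
  | succ n ih =>
    have h1 : z (4 * n + 1) = z (4 * n) + (1 + ω) ^ (u (4 * n)) / ω ^ (2 * v (4 * n)) :=
      hrec (4 * n)
    have h2 := hrec (4 * n + 1)
    have h3 := hrec (4 * n + 2)
    have h4 := hrec (4 * n + 3)
    norm_num at h2 h3 h4
    rw [show 4 * (n + 1) = 4 * n + 4 by ring, h4, h3, h2, h1, ih, hrec n]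
    have := step_sum n
    linear_combination this
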